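/- Let N ≥ 1, let c, τ > 0, let σ be the uniform probability measure on the unit sphere S^{N−1} of ℝ^N, and for R ≥ 0 define (T_R u)(x) := ∫_{S^{N−1}} u(x + R·y) dσ(y). For t > 0 let n(t) be the unique natural number m with m·τ < t ≤ (m+1)·τ and R(t) := c·(t − n(t)·τ). Let u : ℝ^N → ℝ be continuous and bounded, and define the causal diffusion v by v(x,0) := u(x) and v(x,t) := (T_{R(t)}((T_{cτ})^{n(t)} u))(x) for t > 0, where (T_{cτ})^{n(t)} denotes the n(t)-fold iterate. Then for every x ∈ ℝ^N, the map t ↦ v(x,t) is continuous on [0,∞); in particular v(x,0+) = u(x). -/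

import Mathlib

open MeasureTheory

/-- The uniform probability measure on the unit sphere of `ℝ^N`, viewed as a measure
on `ℝ^N` (the normalized surface measure, pushed forward along the inclusion). -/
noncomputable def sphereUniform (N : ℕ) : Measure (EuclideanSpace ℝ (Fin N)) :=
  ((volume : Measure (EuclideanSpace ℝ (Fin N))).toSphere Set.univ)⁻¹ •
    Measure.map (Subtype.val : Metric.sphere (0 : EuclideanSpace ℝ (Fin N)) 1 → _)
      (volume : Measure (EuclideanSpace ℝ (Fin N))).toSphere

/-- The spherical mean operator `(T_R u)(x) = ∫_{S^{N-1}} u (x + R y) dσ(y)`. -/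
noncomputable def sphMean (N : ℕ) (R : ℝ) (u : EuclideanSpace ℝ (Fin N) → ℝ)
    (x : EuclideanSpace ℝ (Fin N)) : ℝ :=
  ∫ y, u (x + R • y) ∂(sphereUniform N)
/-- For `t, τ > 0`, the unique `m ∈ ℕ` with `m τ < t ≤ (m+1) τ`. -/
noncomputable def stepIndex (τ t : ℝ) : ℕ := ⌈t / τ⌉₊ - 1

/-- The causal diffusion model with speed `c` and period `τ`:
`v(x,t) = (T_{R(t)} ((T_{cτ})^{n(t)} u)) x` for `t > 0` (where `n(t)` is the unique
natural number with `n(t) τ < t ≤ (n(t)+1) τ` and `R(t) = c (t - n(t) τ)`), and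
`v(x,0) = u(x)`. -/
noncomputable def causalDiffusion (N : ℕ) (c τ : ℝ) (u : EuclideanSpace ℝ (Fin N) → ℝ)
    (x : EuclideanSpace ℝ (Fin N)) (t : ℝ) : ℝ :=
  if t ≤ 0 then u x
  else sphMean N (c * (t - stepIndex τ t * τ)) ((sphMean N (c * τ))^[stepIndex τ t] u) x
lemma sphereUniform_prob (N : ℕ) (hN : 1 ≤ N) : IsProbabilityMeasure (sphereUniform N) := by
  constructor
  rw [sphereUniform, Measure.smul_apply,
    Measure.map_apply measurable_subtype_coe MeasurableSet.univ]
  simp only [Set.preimage_univ, smul_eq_mul]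
  have h : (volume : Measure (EuclideanSpace ℝ (Fin N))).toSphere Set.univ
      = N * volume (Metric.ball (0 : EuclideanSpace ℝ (Fin N)) 1) := by
    rw [Measure.toSphere_apply_univ]
    congr 1
    simp [finrank_euclideanSpace]
  refine ENNReal.inv_mul_cancel ?_ ?_
  · rw [h]
    refine mul_ne_zero ?_ ?_
    · simpa using Nat.pos_of_ne_zero (by omega) |>.ne'
    · exact (Metric.measure_ball_pos _ _ one_pos).ne'
  · rw [h]
    exact (ENNReal.mul_lt_top (ENNReal.natCast_lt_top _) measure_ball_lt_top).ne

section lems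
variable {N : ℕ} {w : EuclideanSpace ℝ (Fin N) → ℝ} {C : ℝ}

lemma sphMean_bound (hN : 1 ≤ N) (hb : ∀ y, |w y| ≤ C) (R : ℝ) (x : EuclideanSpace ℝ (Fin N)) :
    |sphMean N R w x| ≤ C := by
  have := sphereUniform_prob N hN
  have := norm_integral_le_of_norm_le_const
    (μ := sphereUniform N) (C := C) (f := fun y => w (x + R • y))
    (Filter.Eventually.of_forall fun y => by simpa using hb _)
  simpa [sphMean] using this

lemma sphMean_zero (hN : 1 ≤ N) (hwc : Continuous w) (x : EuclideanSpace ℝ (Fin N)) :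
    sphMean N 0 w x = w x := by
  have := sphereUniform_prob N hN
  simp [sphMean]

lemma sphMean_continuous_x (hN : 1 ≤ N) (hwc : Continuous w) (hb : ∀ y, |w y| ≤ C) (R : ℝ) :
    Continuous (sphMean N R w) := by
  have := sphereUniform_prob N hN
  refine continuous_of_dominated (bound := fun _ => C) ?_ ?_ (integrable_const C) ?_
  · exact fun x => (by fun_prop : Continuous fun y : EuclideanSpace ℝ (Fin N) => w (x + R • y)).aestronglyMeasurable
  · exact fun x => Filter.Eventually.of_forall fun y => by simpa using hb _
  · exact Filter.Eventually.of_forall fun y => (by fun_prop : Continuous fun x : EuclideanSpace ℝ (Fin N) => w (x + R • y))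

lemma sphMean_continuous_R (hN : 1 ≤ N) (hwc : Continuous w) (hb : ∀ y, |w y| ≤ C)
    (x : EuclideanSpace ℝ (Fin N)) :
    Continuous (fun R => sphMean N R w x) := by
  have := sphereUniform_prob N hN
  refine continuous_of_dominated (bound := fun _ => C) ?_ ?_ (integrable_const C) ?_
  · exact fun R => (by fun_prop : Continuous fun y : EuclideanSpace ℝ (Fin N) => w (x + R • y)).aestronglyMeasurable
  · exact fun R => Filter.Eventually.of_forall fun y => by simpa using hb _
  · exact Filter.Eventually.of_forall fun y => (by fun_prop : Continuous fun R : ℝ => w (x + R • y))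

end lems

lemma stepIndex_eq {τ : ℝ} (hτ : 0 < τ) (m : ℕ) {t : ℝ}
    (h1 : m * τ < t) (h2 : t ≤ (m + 1) * τ) : stepIndex τ t = m := by
  have hceil : ⌈t / τ⌉₊ = m + 1 := by
    rw [Nat.ceil_eq_iff (by omega)]
    constructor
    · simpa using (lt_div_iff₀ hτ).2 h1
    · rw [div_le_iff₀ hτ]; push_cast; linarith
  simp [stepIndex, hceil]

lemma stepIndex_spec {τ t : ℝ} (hτ : 0 < τ) (ht : 0 < t) :
    (stepIndex τ t : ℝ) * τ < t ∧ t ≤ ((stepIndex τ t : ℝ) + 1) * τ := by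
  have hpos : 0 < t / τ := div_pos ht hτ
  have hk : 1 ≤ ⌈t / τ⌉₊ := Nat.one_le_iff_ne_zero.2 (by positivity)
  have hub : t / τ ≤ ⌈t / τ⌉₊ := Nat.le_ceil _
  have hlb : ((⌈t / τ⌉₊ - 1 : ℕ) : ℝ) < t / τ := Nat.lt_ceil.1 (by omega)
  constructor
  · have := (lt_div_iff₀ hτ).1 hlb
    simpa [stepIndex] using this
  · have h' : t / τ ≤ ((⌈t / τ⌉₊ - 1 : ℕ) : ℝ) + 1 := by
      push_cast [hk]; linarith
    have := (div_le_iff₀ hτ).1 h'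
    simpa [stepIndex] using this

/-- For continuous bounded initial data, the causal diffusion `t ↦ v(x,t)` is
continuous on `[0,∞)`; in particular `v(x,0+) = u(x)`. -/
theorem stmt_15 (N : ℕ) (hN : 1 ≤ N) (c τ : ℝ) (hc : 0 < c) (hτ : 0 < τ)
    (u : EuclideanSpace ℝ (Fin N) → ℝ) (huc : Continuous u)
    (hub : ∃ C : ℝ, ∀ x, |u x| ≤ C) (x : EuclideanSpace ℝ (Fin N)) :
    ContinuousOn (fun t => causalDiffusion N c τ u x t) (Set.Ici 0) ∧
      Filter.Tendsto (fun t => causalDiffusion N c τ u x t)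
        (nhdsWithin 0 (Set.Ioi 0)) (nhds (u x)) := by
  obtain ⟨C, hC⟩ := hub
  set v : ℝ → ℝ := fun t => causalDiffusion N c τ u x t with hv
  set w : ℕ → EuclideanSpace ℝ (Fin N) → ℝ := fun m => (sphMean N (c * τ))^[m] u with hw
  have hwb : ∀ m y, |w m y| ≤ C := by
    intro m
    induction m with
    | zero => exact hC
    | succ k ih =>
        intro y
        have : w (k+1) = sphMean N (c*τ) (w k) := by
          simp only [hw, Function.iterate_succ_apply']
        rw [this]
        exact sphMean_bound hN ih _ _
  have hwc : ∀ m, Continuous (w m) := by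
    intro m
    induction m with
    | zero => exact huc
    | succ k ih =>
        have : w (k+1) = sphMean N (c*τ) (w k) := by
          simp only [hw, Function.iterate_succ_apply']
        rw [this]
        exact sphMean_continuous_x hN ih (hwb k) _
  set g : ℕ → ℝ → ℝ := fun m t => sphMean N (c * (t - m * τ)) (w m) x with hg
  have hgc : ∀ m, Continuous (g m) := by
    intro m
    exact (sphMean_continuous_R hN (hwc m) (hwb m) x).comp
      (continuous_const.mul (continuous_id.sub continuous_const))
  have agree : ∀ m : ℕ, ∀ t ∈ Set.Icc ((m : ℝ) * τ) (((m : ℝ) + 1) * τ), v t = g m t := by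
    intro m t ht
    rcases eq_or_lt_of_le ht.1 with heq | hlt
    · -- t = m * τ
      cases m with
      | zero =>
          have ht0 : t = 0 := by simpa using heq.symm
          subst ht0
          have : v 0 = u x := by simp [hv, causalDiffusion]
          rw [this, hg]
          simp only [Nat.cast_zero, zero_mul, sub_zero, mul_zero]
          exact (sphMean_zero hN (hwc 0) x).symm
      | succ k =>
          have htpos : 0 < t := by
            rw [← heq]; push_cast; positivity
          have hstep : stepIndex τ t = k := by
            apply stepIndex_eq hτ
            · rw [← heq]; push_cast; nlinarith
            · rw [← heq]; push_cast; exact le_rfl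
          have hvt : v t = sphMean N (c * (t - k * τ)) (w k) x := by
            simp only [hv, causalDiffusion, if_neg (not_le.2 htpos), hstep, hw]
          have harg : c * (t - (k : ℝ) * τ) = c * τ := by
            rw [← heq]; push_cast; ring
          have hgt : g (k+1) t = w (k+1) x := by
            have harg2 : c * (t - ((k:ℕ)+1 : ℝ) * τ) = 0 := by
              rw [← heq]; push_cast; ring
            simp only [hg]
            push_cast at harg2 ⊢
            rw [harg2]
            exact sphMean_zero hN (hwc (k+1)) x
          rw [hvt, harg, hgt]
          simp only [hw, Function.iterate_succ_apply']
    · -- m * τ < t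
      have htpos : 0 < t := lt_of_le_of_lt (by positivity) hlt
      have hstep : stepIndex τ t = m := stepIndex_eq hτ m (by push_cast; exact hlt)
        (by push_cast; exact ht.2)
      simp only [hv, causalDiffusion, if_neg (not_le.2 htpos), hstep, hg, hw]
  have cwa : ∀ (m : ℕ) (t0 : ℝ), t0 ∈ Set.Icc ((m : ℝ) * τ) (((m : ℝ) + 1) * τ) →
      ContinuousWithinAt v (Set.Icc ((m : ℝ) * τ) (((m : ℝ) + 1) * τ)) t0 := by
    intro m t0 ht0
    exact ((hgc m).continuousWithinAt).congr (agree m) (agree m t0 ht0)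
  have hcont : ContinuousOn v (Set.Ici 0) := by
    intro t0 ht0
    rcases eq_or_lt_of_le (Set.mem_Ici.1 ht0) with heq | htpos
    · -- t0 = 0
      subst heq
      refine ContinuousWithinAt.mono_of_mem_nhdsWithin (cwa 0 0 ?_) ?_
      · constructor <;> simp <;> positivity
      · refine Filter.mem_of_superset
          (Filter.inter_mem self_mem_nhdsWithin
            (mem_nhdsWithin_of_mem_nhds (Iic_mem_nhds hτ))) ?_
        rintro y ⟨hy1, hy2⟩
        constructor
        · simpa using hy1
        · simpa using hy2
    · set m := stepIndex τ t0 with hm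
      obtain ⟨h1, h2⟩ := stepIndex_spec hτ htpos
      rcases lt_or_eq_of_le h2 with hlt | heq
      · exact ((cwa m t0 ⟨h1.le, h2⟩).continuousAt
          (Icc_mem_nhds h1 hlt)).continuousWithinAt
      · have hA := cwa m t0 ⟨h1.le, h2⟩
        have hB := cwa (m+1) t0 ⟨by push_cast; exact heq.ge, by push_cast; nlinarith⟩
        push_cast at hB
        have hU := hA.union hB
        rw [Set.Icc_union_Icc_eq_Icc (by nlinarith) (by nlinarith)] at hU
        exact (hU.continuousAt (Icc_mem_nhds h1 (by nlinarith))).continuousWithinAt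
  refine ⟨hcont, ?_⟩
  have h0 : ContinuousWithinAt v (Set.Ioi 0) 0 :=
    (hcont 0 (by simp)).mono Set.Ioi_subset_Ici_self
  have hv0 : v 0 = u x := by simp [hv, causalDiffusion]
  simpa [ContinuousWithinAt, hv0] using h0
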